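/- The interior Abelian integrals I₀ and I₂ are differentiable on (−1/4, 0) and satisfy the Picard–Fuchs system: for every h ∈ (−1/4, 0), I₀(h) = (4/3)·h·I₀'(h) + (1/3)·I₂'(h) and I₂(h) = (4/15)·h·I₀'(h) + (4h/5 + 4/15)·I₂'(h). -/

import Mathlib

open MeasureTheory

/-- Left endpoint `x₁(h) = √(1 − √(1+4h))` of the interior oval of the Duffing Hamiltonian
`H(x,y) = y²/2 − x²/2 + x⁴/4`. -/
noncomputable def x1 (h : ℝ) : ℝ := Real.sqrt (1 - Real.sqrt (1 + 4*h))

/-- Right endpoint `x₂(h) = √(1 + √(1+4h))` of the interior oval. -/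
noncomputable def x2 (h : ℝ) : ℝ := Real.sqrt (1 + Real.sqrt (1 + 4*h))

/-- The interior Abelian integrals `I_i(h) = 2∫_{x₁(h)}^{x₂(h)} xⁱ √(2h + x² − x⁴/2) dx`. -/
noncomputable def Iint (i : ℕ) (h : ℝ) : ℝ :=
  2 * ∫ x in x1 h..x2 h, x ^ i * Real.sqrt (2*h + x^2 - x^4/2)

namespace PFaux

/-- The polynomial under the square root. -/
noncomputable def fd (y x : ℝ) : ℝ := 2*y + x^2 - x^4/2

variable {y : ℝ}

lemma s_pos (h1 : -1/4 < y) : 0 < Real.sqrt (1+4*y) := Real.sqrt_pos.2 (by linarith)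

lemma s_lt_one (h2 : y < 0) : Real.sqrt (1+4*y) < 1 :=
  (Real.sqrt_lt' one_pos).2 (by nlinarith)

lemma sq_x1 (h2 : y < 0) : (x1 y)^2 = 1 - Real.sqrt (1+4*y) :=
  Real.sq_sqrt (by linarith [s_lt_one h2])

lemma sq_x2 : (x2 y)^2 = 1 + Real.sqrt (1+4*y) :=
  Real.sq_sqrt (by linarith [Real.sqrt_nonneg (1+4*y)])

lemma x1_pos (h2 : y < 0) : 0 < x1 y := Real.sqrt_pos.2 (by linarith [s_lt_one h2])

lemma x1_lt_x2 (h1 : -1/4 < y) (h2 : y < 0) : x1 y < x2 y :=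
  Real.sqrt_lt_sqrt (by linarith [s_lt_one h2]) (by linarith [s_pos h1])

lemma x2_lt_two (h2 : y < 0) : x2 y < 2 :=
  (Real.sqrt_lt' (by norm_num)).2 (by norm_num; linarith [s_lt_one h2])

lemma factor (h1 : -1/4 < y) (h2 : y < 0) (x : ℝ) :
    fd y x = 1/2 * (x^2 - (x1 y)^2) * ((x2 y)^2 - x^2) := by
  have hs : Real.sqrt (1+4*y) ^ 2 = 1 + 4*y := Real.sq_sqrt (by linarith)
  rw [sq_x1 h2, sq_x2]
  unfold fd
  linear_combination (-1/2 : ℝ) * hs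

lemma fd_nonpos_left (h1 : -1/4 < y) (h2 : y < 0) {x : ℝ} (hx : 0 ≤ x) (hx1 : x ≤ x1 y) :
    fd y x ≤ 0 := by
  rw [factor h1 h2]
  have h3 : x^2 ≤ (x1 y)^2 := pow_le_pow_left₀ hx hx1 2
  have h4 : (x1 y)^2 < (x2 y)^2 := by
    rw [sq_x1 h2, sq_x2]; linarith [s_pos h1]
  nlinarith

lemma fd_nonpos_right (h1 : -1/4 < y) (h2 : y < 0) {x : ℝ} (hx2 : x2 y ≤ x) :
    fd y x ≤ 0 := by
  rw [factor h1 h2]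
  have hx2p : 0 < x2 y := lt_trans (x1_pos h2) (x1_lt_x2 h1 h2)
  have h3 : (x2 y)^2 ≤ x^2 := pow_le_pow_left₀ hx2p.le hx2 2
  have h4 : (x1 y)^2 < (x2 y)^2 := by
    rw [sq_x1 h2, sq_x2]; linarith [s_pos h1]
  nlinarith

lemma fd_pos (h1 : -1/4 < y) (h2 : y < 0) {x : ℝ} (hx1 : x1 y < x) (hx2 : x < x2 y) :
    0 < fd y x := by
  rw [factor h1 h2]
  have h0 : 0 < x1 y := x1_pos h2
  have h3 : (x1 y)^2 < x^2 := by nlinarith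
  have h4 : x^2 < (x2 y)^2 := by nlinarith
  nlinarith

lemma fd_zero_x1 (h1 : -1/4 < y) (h2 : y < 0) : fd y (x1 y) = 0 := by
  rw [factor h1 h2]; ring

lemma fd_zero_x2 (h1 : -1/4 < y) (h2 : y < 0) : fd y (x2 y) = 0 := by
  rw [factor h1 h2]; ring

lemma fd_ne (h1 : -1/4 < y) (h2 : y < 0) {x : ℝ} (hx : 0 < x) (hne1 : x ≠ x1 y)
    (hne2 : x ≠ x2 y) : fd y x ≠ 0 := by
  rcases lt_trichotomy x (x1 y) with hc | hc | hc
  · have := fd_pos h1 h2 (x := x)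
    -- x < x1 : fd < 0? we only know ≤ 0; need strict. use factor directly
    rw [factor h1 h2]
    have h3 : x^2 < (x1 y)^2 := by nlinarith [x1_pos h2]
    have h4 : (x1 y)^2 < (x2 y)^2 := by rw [sq_x1 h2, sq_x2]; linarith [s_pos h1]
    nlinarith
  · exact absurd hc hne1
  · rcases lt_trichotomy x (x2 y) with hd | hd | hd
    · exact (fd_pos h1 h2 hc hd).ne'
    · exact absurd hd hne2
    · rw [factor h1 h2]
      have hx2p : 0 < x2 y := lt_trans (x1_pos h2) (x1_lt_x2 h1 h2)
      have h3 : (x2 y)^2 < x^2 := by nlinarith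
      have h4 : (x1 y)^2 < (x2 y)^2 := by rw [sq_x1 h2, sq_x2]; linarith [s_pos h1]
      nlinarith


lemma base_sqrtInv (b : ℝ) (hb : 0 ≤ b) :
    IntervalIntegrable (fun x => (Real.sqrt |x|)⁻¹) volume 0 b := by
  apply (intervalIntegral.intervalIntegrable_rpow' (r := -(1/2)) (by norm_num)).mono_fun
  · exact ((Real.continuous_sqrt.comp continuous_abs).measurable.inv).aestronglyMeasurable
  · filter_upwards [ae_restrict_mem measurableSet_uIoc] with x hx
    rw [Set.uIoc_of_le hb] at hx
    have hx0 : 0 < x := hx.1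
    have : (Real.sqrt |x|)⁻¹ = x ^ (-(1/2) : ℝ) := by
      rw [abs_of_pos hx0, Real.rpow_neg hx0.le, ← Real.sqrt_eq_rpow]
    simp only [Real.norm_eq_abs, this, le_refl]

lemma sqrtInv_intInt (c d e : ℝ) :
    IntervalIntegrable (fun x => (Real.sqrt |x - c|)⁻¹) volume d e := by
  have base : ∀ b : ℝ, IntervalIntegrable (fun x => (Real.sqrt |x|)⁻¹) volume 0 b := by
    intro b
    rcases le_or_gt 0 b with hb | hb
    · exact base_sqrtInv b hb
    · have h0 := base_sqrtInv (-b) (by linarith)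
      have := (IntervalIntegrable.iff_comp_neg).1 h0
      simpa using this
  have h0 : IntervalIntegrable (fun x => (Real.sqrt |x|)⁻¹) volume (d - c) (e - c) :=
    ((base (d - c)).symm.trans (base (e - c)))
  have := h0.comp_sub_right c
  simpa using this

lemma fd_continuous (y : ℝ) : Continuous (fun x => fd y x) := by
  unfold fd; continuity

lemma ae_ne_restrict (μ : Measure ℝ) [NullSingletonClass μ] (c : ℝ) : ∀ᵐ x ∂μ, x ≠ c := by
  rw [ae_iff]
  have : {x : ℝ | ¬ x ≠ c} = {c} := by ext z; simp
  rw [this]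
  exact measure_singleton c

lemma helper_piece (h1 : -1/4 < y) (h2 : y < 0) (c C d e : ℝ) (hC : 0 < C)
    (hbound : ∀ x ∈ Set.uIoc d e, x ≠ c → C * |x - c| ≤ |fd y x|) :
    IntervalIntegrable (fun x => (Real.sqrt |fd y x|)⁻¹) volume d e := by
  apply ((sqrtInv_intInt c d e).const_mul (Real.sqrt C)⁻¹).mono_fun
  · exact ((Real.continuous_sqrt.comp ((fd_continuous y).abs)).measurable.inv).aestronglyMeasurable
  · filter_upwards [ae_restrict_mem measurableSet_uIoc,
      ae_restrict_of_ae (ae_ne_restrict volume c)] with x hx hne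
    have h5 : 0 < |x - c| := abs_pos.2 (sub_ne_zero.2 hne)
    have h6 : C * |x - c| ≤ |fd y x| := hbound x hx hne
    have h7 : Real.sqrt (C * |x - c|) ≤ Real.sqrt |fd y x| := Real.sqrt_le_sqrt h6
    rw [Real.sqrt_mul hC.le] at h7
    have h8 : 0 < Real.sqrt C * Real.sqrt |x - c| :=
      mul_pos (Real.sqrt_pos.2 hC) (Real.sqrt_pos.2 h5)
    have h9 : (Real.sqrt |fd y x|)⁻¹ ≤ (Real.sqrt C * Real.sqrt |x - c|)⁻¹ :=
      inv_anti₀ h8 h7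
    rw [mul_inv] at h9
    have h11 : 0 ≤ (Real.sqrt |fd y x|)⁻¹ := by positivity
    rw [Real.norm_eq_abs, Real.norm_eq_abs, abs_of_nonneg h11,
      abs_of_nonneg (by positivity : (0:ℝ) ≤ (Real.sqrt C)⁻¹ * (Real.sqrt |x - c|)⁻¹)]
    exact h9

set_option maxHeartbeats 1000000 in
lemma Kint (h1 : -1/4 < y) (h2 : y < 0) :
    IntervalIntegrable (fun x => (Real.sqrt |fd y x|)⁻¹) volume 0 2 := by
  set a1 := x1 y with ha1def
  set a2 := x2 y with ha2def
  set m := (a1 + a2)/2 with hmdef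
  have ha1 : 0 < a1 := x1_pos h2
  have h12 : a1 < a2 := x1_lt_x2 h1 h2
  have ha2 : a2 < 2 := x2_lt_two h2
  have hm1 : a1 < m := by simp only [hmdef]; linarith
  have hm2 : m < a2 := by simp only [hmdef]; linarith
  have hm0 : 0 < m := by linarith
  have hsq : a1^2 < a2^2 := by nlinarith
  have left : IntervalIntegrable (fun x => (Real.sqrt |fd y x|)⁻¹) volume 0 m := by
    apply helper_piece h1 h2 a1 (a1 * ((a2^2 - m^2)/2)) 0 m
    · have hmm : m^2 < a2^2 := by nlinarith
      nlinarith
    · intro x hx hne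
      rw [Set.uIoc_of_le hm0.le] at hx
      have hx0 : 0 < x := hx.1
      have hxm : x ≤ m := hx.2
      have hxsq : x^2 ≤ m^2 := by nlinarith
      have h8 : 0 < a2^2 - x^2 := by nlinarith
      rw [factor h1 h2]
      have e1 : |1/2 * (x^2 - a1^2) * (a2^2 - x^2)| = 1/2 * (|x - a1| * (x + a1)) * (a2^2 - x^2) := by
        rw [abs_mul, abs_mul, abs_of_pos h8, abs_of_pos (by norm_num : (0:ℝ) < 1/2)]
        congr 1
        have : x^2 - a1^2 = (x - a1) * (x + a1) := by ring
        rw [this, abs_mul, abs_of_pos (by linarith : (0:ℝ) < x + a1)]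
      rw [e1]
      have hxa : a1 ≤ x + a1 := by linarith
      have hq : a2^2 - m^2 ≤ a2^2 - x^2 := by linarith
      have hA : 0 ≤ |x - a1| := abs_nonneg _
      nlinarith [mul_le_mul hxa hq (by nlinarith) (by linarith : (0:ℝ) ≤ x + a1)]
  have right : IntervalIntegrable (fun x => (Real.sqrt |fd y x|)⁻¹) volume m 2 := by
    apply helper_piece h1 h2 a2 (((m^2 - a1^2)/2) * a2) m 2
    · have hmm : a1^2 < m^2 := by nlinarith
      nlinarith
    · intro x hx hne
      rw [Set.uIoc_of_le (by linarith : m ≤ 2)] at hx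
      have hx0 : m < x := hx.1
      have hx2 : x ≤ 2 := hx.2
      have hxsq : m^2 ≤ x^2 := by nlinarith
      have h8 : 0 < x^2 - a1^2 := by nlinarith
      rw [factor h1 h2]
      have e1 : |1/2 * (x^2 - a1^2) * (a2^2 - x^2)| = 1/2 * (x^2 - a1^2) * (|x - a2| * (x + a2)) := by
        rw [abs_mul, abs_mul, abs_of_pos h8, abs_of_pos (by norm_num : (0:ℝ) < 1/2)]
        rw [mul_assoc, mul_assoc]
        congr 1
        have : a2^2 - x^2 = -((x - a2) * (x + a2)) := by ring
        rw [this, abs_neg, abs_mul, abs_of_pos (by linarith : (0:ℝ) < x + a2)]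
      rw [e1]
      have hxa : a2 ≤ x + a2 := by linarith
      have hq : m^2 - a1^2 ≤ x^2 - a1^2 := by linarith
      have hA : 0 ≤ |x - a2| := abs_nonneg _
      nlinarith [mul_le_mul hq hxa (by linarith) (by nlinarith : (0:ℝ) ≤ x^2 - a1^2)]
  exact left.trans right

lemma Kint' (h1 : -1/4 < y) (h2 : y < 0) :
    IntervalIntegrable (fun x => (Real.sqrt (fd y x))⁻¹) volume 0 2 := by
  apply (Kint h1 h2).mono_fun
  · exact ((Real.continuous_sqrt.comp (fd_continuous y)).measurable.inv).aestronglyMeasurable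
  · apply Filter.Eventually.of_forall
    intro x
    have h10 : (Real.sqrt (fd y x))⁻¹ ≤ (Real.sqrt |fd y x|)⁻¹ := by
      rcases le_or_gt (fd y x) 0 with hc | hc
      · rw [Real.sqrt_eq_zero'.2 hc, inv_zero]; positivity
      · rw [abs_of_pos hc]
    simp only [Real.norm_eq_abs, abs_of_nonneg (by positivity : (0:ℝ) ≤ (Real.sqrt (fd y x))⁻¹),
      abs_of_nonneg (by positivity : (0:ℝ) ≤ (Real.sqrt |fd y x|)⁻¹)]
    exact h10

lemma Jk_int (h1 : -1/4 < y) (h2 : y < 0) (k : ℕ) :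
    IntervalIntegrable (fun x => x^k * (Real.sqrt (fd y x))⁻¹) volume 0 2 :=
  (Kint' h1 h2).continuousOn_mul (by fun_prop)

lemma Ik_int (y : ℝ) (k : ℕ) (d e : ℝ) :
    IntervalIntegrable (fun x => x^k * Real.sqrt (fd y x)) volume d e :=
  Continuous.intervalIntegrable ((continuous_pow k).mul (fd_continuous y).sqrt) d e

lemma key_est {a t : ℝ} (ha : a ≠ 0) (ht : t ≠ 0) :
    |Real.sqrt (a + 2*t) - Real.sqrt a| ≤ 2 * (Real.sqrt |a|)⁻¹ * |t| := by
  rcases ha.lt_or_gt with ha' | ha'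
  · -- a < 0
    rw [abs_of_neg ha', Real.sqrt_eq_zero'.2 ha'.le, sub_zero]
    have hv : 0 < Real.sqrt (-a) := Real.sqrt_pos.2 (by linarith)
    rcases le_or_gt (a + 2*t) 0 with hc | hc
    · rw [Real.sqrt_eq_zero'.2 hc, abs_zero]
      positivity
    · have ht0 : 0 < t := by linarith
      have main : Real.sqrt (a + 2*t) * Real.sqrt (-a) ≤ 2*t := by
        rw [← Real.sqrt_mul hc.le]
        have h9 : (a + 2*t) * (-a) ≤ (2*t)^2 := by nlinarith [sq_nonneg (t + a)]
        calc Real.sqrt ((a + 2*t) * (-a)) ≤ Real.sqrt ((2*t)^2) := Real.sqrt_le_sqrt h9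
          _ = 2*t := Real.sqrt_sq (by linarith)
      rw [abs_of_nonneg (Real.sqrt_nonneg _), abs_of_pos ht0]
      calc Real.sqrt (a + 2*t) = (Real.sqrt (a + 2*t) * Real.sqrt (-a)) * (Real.sqrt (-a))⁻¹ := by
            field_simp
        _ ≤ (2*t) * (Real.sqrt (-a))⁻¹ := by
            apply mul_le_mul_of_nonneg_right main (by positivity)
        _ = 2 * (Real.sqrt (-a))⁻¹ * t := by ring
  · -- a > 0
    rw [abs_of_pos ha']
    have hv : 0 < Real.sqrt a := Real.sqrt_pos.2 ha'
    have hv2 : Real.sqrt a ^ 2 = a := Real.sq_sqrt ha'.le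
    rcases le_or_gt (a + 2*t) 0 with hc | hc
    · rw [Real.sqrt_eq_zero'.2 hc, zero_sub, abs_neg, abs_of_nonneg (Real.sqrt_nonneg _)]
      have h9 : a ≤ 2 * |t| := by
        rcases abs_cases t with h | h <;> nlinarith
      calc Real.sqrt a = a * (Real.sqrt a)⁻¹ := by
            rw [← hv2]; field_simp; exact Real.sq_sqrt (by positivity)
        _ ≤ (2 * |t|) * (Real.sqrt a)⁻¹ := mul_le_mul_of_nonneg_right h9 (by positivity)
        _ = 2 * (Real.sqrt a)⁻¹ * |t| := by ring
    · have hu2 : Real.sqrt (a + 2*t) ^ 2 = a + 2*t := Real.sq_sqrt hc.le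
      set u := Real.sqrt (a + 2*t)
      set v := Real.sqrt a
      have hup : 0 ≤ u := Real.sqrt_nonneg _
      have e : (u - v) * (u + v) = 2*t := by linear_combination hu2 - hv2
      have e2 : |u - v| * (u + v) = 2 * |t| := by
        have : |(u - v) * (u + v)| = |2*t| := by rw [e]
        rw [abs_mul, abs_of_pos (by linarith : 0 < u + v)] at this
        rw [this, abs_mul]
        norm_num
      have e3 : |u - v| * v ≤ 2 * |t| := by
        rw [← e2]
        apply mul_le_mul_of_nonneg_left (by linarith) (abs_nonneg _)
      calc |u - v| = (|u - v| * v) * v⁻¹ := by field_simp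
        _ ≤ (2 * |t|) * v⁻¹ := mul_le_mul_of_nonneg_right e3 (by positivity)
        _ = 2 * v⁻¹ * |t| := by ring

lemma fd_shift (z y x : ℝ) : fd z x = fd y x + 2*(z - y) := by unfold fd; ring

lemma hasDeriv_G (h1 : -1/4 < y) (h2 : y < 0) (i : ℕ) :
    HasDerivAt (fun z => ∫ x in (0:ℝ)..2, x^i * Real.sqrt (fd z x))
      (∫ x in (0:ℝ)..2, x^i * (Real.sqrt (fd y x))⁻¹) y := by
  rw [hasDerivAt_iff_tendsto_slope]
  have heq : ∀ z : ℝ, (∫ x in (0:ℝ)..2, (x^i * Real.sqrt (fd z x)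
        - x^i * Real.sqrt (fd y x)) / (z - y))
      = slope (fun z => ∫ x in (0:ℝ)..2, x^i * Real.sqrt (fd z x)) y z := by
    intro z
    rw [slope_def_field, intervalIntegral.integral_div,
      intervalIntegral.integral_sub (Ik_int z i 0 2) (Ik_int y i 0 2)]
  apply Filter.Tendsto.congr heq
  have h02 : (0:ℝ) ≤ 2 := by norm_num
  simp only [intervalIntegral.integral_of_le h02]
  apply MeasureTheory.tendsto_integral_filter_of_dominated_convergence
    (bound := fun x => |x|^i * (2 * (Real.sqrt |fd y x|)⁻¹))
  · apply Filter.Eventually.of_forall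
    intro z
    exact ((((continuous_pow i).mul (fd_continuous z).sqrt).sub
      ((continuous_pow i).mul (fd_continuous y).sqrt)).div_const _).aestronglyMeasurable
  · filter_upwards [self_mem_nhdsWithin] with z hz
    have htne : z - y ≠ 0 := sub_ne_zero.2 hz
    filter_upwards [ae_restrict_of_ae (ae_ne_restrict volume (x1 y)),
      ae_restrict_of_ae (ae_ne_restrict volume (x2 y)),
      ae_restrict_mem measurableSet_Ioc] with x hne1 hne2 hx
    have hfdne : fd y x ≠ 0 := fd_ne h1 h2 hx.1 hne1 hne2
    have key := key_est hfdne htne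
    have e : (x^i * Real.sqrt (fd z x) - x^i * Real.sqrt (fd y x)) / (z - y)
        = x^i * ((Real.sqrt (fd y x + 2*(z-y)) - Real.sqrt (fd y x)) / (z - y)) := by
      rw [← fd_shift z y x]; ring
    rw [e, Real.norm_eq_abs, abs_mul, abs_pow, abs_div]
    apply mul_le_mul_of_nonneg_left _ (pow_nonneg (abs_nonneg x) i)
    rw [div_le_iff₀ (abs_pos.2 htne)]
    exact key
  · have hII := (Kint h1 h2).continuousOn_mul (g := fun x => |x|^i * 2) (by fun_prop)
    simp only [mul_assoc] at hII
    exact (intervalIntegrable_iff_integrableOn_Ioc_of_le h02).1 hII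
  · filter_upwards [ae_restrict_of_ae (ae_ne_restrict volume (x1 y)),
      ae_restrict_of_ae (ae_ne_restrict volume (x2 y)),
      ae_restrict_mem measurableSet_Ioc] with x hne1 hne2 hx
    have hfdne : fd y x ≠ 0 := fd_ne h1 h2 hx.1 hne1 hne2
    have hd : HasDerivAt (fun z => fd z x) 2 y := by
      have e : (fun z => fd z x) = fun z => 2*z + (x^2 - x^4/2) := by
        funext z; unfold fd; ring
      rw [e]
      simpa using ((hasDerivAt_id y).const_mul (2:ℝ)).add_const (x^2 - x^4/2)
    have hs : HasDerivAt (fun z => Real.sqrt (fd z x))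
        (1/(2*Real.sqrt (fd y x)) * 2) y := (Real.hasDerivAt_sqrt hfdne).comp y hd
    have hm : HasDerivAt (fun z => x^i * Real.sqrt (fd z x))
        (x^i * (1/(2*Real.sqrt (fd y x)) * 2)) y := hs.const_mul (x^i)
    have hval : x^i * (1/(2*Real.sqrt (fd y x)) * 2) = x^i * (Real.sqrt (fd y x))⁻¹ := by
      rcases eq_or_ne (Real.sqrt (fd y x)) 0 with hc | hc
      · simp [hc]
      · field_simp
    rw [hval] at hm
    have := hasDerivAt_iff_tendsto_slope.1 hm
    apply this.congr
    intro z
    rw [slope_def_field]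

lemma self_mul_inv_sqrt (a : ℝ) : a * (Real.sqrt a)⁻¹ = Real.sqrt a := by
  rcases le_or_gt a 0 with hc | hc
  · rw [Real.sqrt_eq_zero'.2 hc, inv_zero, mul_zero]
  · nth_rewrite 1 [← Real.mul_self_sqrt hc.le]
    rw [mul_inv_cancel_right₀ (Real.sqrt_pos.2 hc).ne']

lemma sqrt_fd_left (h1 : -1/4 < y) (h2 : y < 0) {x : ℝ} (hx : 0 ≤ x) (hx1 : x ≤ x1 y) :
    Real.sqrt (fd y x) = 0 := Real.sqrt_eq_zero'.2 (fd_nonpos_left h1 h2 hx hx1)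

lemma sqrt_fd_right (h1 : -1/4 < y) (h2 : y < 0) {x : ℝ} (hx2 : x2 y ≤ x) :
    Real.sqrt (fd y x) = 0 := Real.sqrt_eq_zero'.2 (fd_nonpos_right h1 h2 hx2)

lemma sub_uIcc (h1 : -1/4 < y) (h2 : y < 0) {d e : ℝ} (hd : 0 ≤ d) (he : e ≤ 2) (hde : d ≤ e) :
    Set.uIcc d e ⊆ Set.uIcc (0:ℝ) 2 := by
  rw [Set.uIcc_of_le hde, Set.uIcc_of_le (by norm_num : (0:ℝ) ≤ 2)]
  exact Set.Icc_subset_Icc hd he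

lemma G_eq_I (h1 : -1/4 < y) (h2 : y < 0) (i : ℕ) :
    Iint i y = 2 * ∫ x in (0:ℝ)..2, x^i * Real.sqrt (fd y x) := by
  have ha1 : 0 < x1 y := x1_pos h2
  have h12 : x1 y < x2 y := x1_lt_x2 h1 h2
  have ha2 : x2 y < 2 := x2_lt_two h2
  have i1 : (∫ x in (0:ℝ)..(x1 y), x^i * Real.sqrt (fd y x)) = 0 := by
    rw [intervalIntegral.integral_congr (g := fun _ => (0:ℝ))
      (fun x hx => by
        rw [Set.uIcc_of_le ha1.le] at hx
        rw [sqrt_fd_left h1 h2 hx.1 hx.2, mul_zero])]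
    simp
  have i3 : (∫ x in (x2 y)..(2:ℝ), x^i * Real.sqrt (fd y x)) = 0 := by
    rw [intervalIntegral.integral_congr (g := fun _ => (0:ℝ))
      (fun x hx => by
        rw [Set.uIcc_of_le (by linarith : x2 y ≤ 2)] at hx
        rw [sqrt_fd_right h1 h2 hx.1, mul_zero])]
    simp
  have A := intervalIntegral.integral_add_adjacent_intervals
    (Ik_int y i 0 (x1 y)) (Ik_int y i (x1 y) (x2 y))
  have B := intervalIntegral.integral_add_adjacent_intervals
    (Ik_int y i 0 (x2 y)) (Ik_int y i (x2 y) 2)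
  show (2:ℝ) * ∫ x in x1 y..x2 y, x^i * Real.sqrt (fd y x) = _
  rw [show (∫ x in (0:ℝ)..2, x^i * Real.sqrt (fd y x))
    = ∫ x in x1 y..x2 y, x^i * Real.sqrt (fd y x) by linarith]

lemma id_pow4 (h1 : -1/4 < y) (h2 : y < 0) (k : ℕ) :
    (∫ x in (0:ℝ)..2, x^(k+4) * (Real.sqrt (fd y x))⁻¹)
      = 4*y*(∫ x in (0:ℝ)..2, x^k * (Real.sqrt (fd y x))⁻¹)
        + 2*(∫ x in (0:ℝ)..2, x^(k+2) * (Real.sqrt (fd y x))⁻¹)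
        - 2*(∫ x in (0:ℝ)..2, x^k * Real.sqrt (fd y x)) := by
  have e : ∀ x : ℝ, x^(k+4) * (Real.sqrt (fd y x))⁻¹
      = 4*y*(x^k * (Real.sqrt (fd y x))⁻¹) + 2*(x^(k+2) * (Real.sqrt (fd y x))⁻¹)
        - 2*(x^k * Real.sqrt (fd y x)) := by
    intro x
    have hs : fd y x * (Real.sqrt (fd y x))⁻¹ = Real.sqrt (fd y x) :=
      self_mul_inv_sqrt (fd y x)
    unfold fd at hs ⊢
    linear_combination (-2*x^k) * hs
  rw [intervalIntegral.integral_congr (g := fun x => 4*y*(x^k * (Real.sqrt (fd y x))⁻¹)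
      + 2*(x^(k+2) * (Real.sqrt (fd y x))⁻¹) - 2*(x^k * Real.sqrt (fd y x)))
      (fun x _ => e x)]
  rw [intervalIntegral.integral_sub (((Jk_int h1 h2 k).const_mul (4*y)).add
      ((Jk_int h1 h2 (k+2)).const_mul 2)) ((Ik_int y k 0 2).const_mul 2)]
  rw [intervalIntegral.integral_add ((Jk_int h1 h2 k).const_mul (4*y))
      ((Jk_int h1 h2 (k+2)).const_mul 2)]
  rw [intervalIntegral.integral_const_mul, intervalIntegral.integral_const_mul,
    intervalIntegral.integral_const_mul]

lemma id_ibp (h1 : -1/4 < y) (h2 : y < 0) (m : ℕ) :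
    (m:ℝ) * (∫ x in (0:ℝ)..2, x^(m-1) * Real.sqrt (fd y x))
      + ((∫ x in (0:ℝ)..2, x^(m+1) * (Real.sqrt (fd y x))⁻¹)
        - (∫ x in (0:ℝ)..2, x^(m+3) * (Real.sqrt (fd y x))⁻¹)) = 0 := by
  have ha1 : 0 < x1 y := x1_pos h2
  have h12 : x1 y < x2 y := x1_lt_x2 h1 h2
  have ha2 : x2 y < 2 := x2_lt_two h2
  set u' : ℝ → ℝ := fun x => (m:ℝ)*(x^(m-1) * Real.sqrt (fd y x))
    + (x^(m+1) - x^(m+3)) * (Real.sqrt (fd y x))⁻¹ with hu'def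
  have hKsub : ∀ d e : ℝ, 0 ≤ d → e ≤ 2 → d ≤ e →
      IntervalIntegrable u' volume d e := by
    intro d e hd he hde
    apply IntervalIntegrable.add
    · exact (Ik_int y (m-1) d e).const_mul _
    · exact ((Kint' h1 h2).mono_set (sub_uIcc h1 h2 hd he hde)).continuousOn_mul (by fun_prop)
  have stepA : (∫ x in (x1 y)..(x2 y), u' x) = 0 := by
    have := intervalIntegral.integral_eq_sub_of_hasDeriv_right_of_le
      (f := fun x => x^m * Real.sqrt (fd y x)) (f' := u') h12.le
      (((continuous_pow m).mul (fd_continuous y).sqrt).continuousOn)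
      ?_ (hKsub (x1 y) (x2 y) ha1.le (by linarith) h12.le)
    · rw [this]
      show x2 y ^ m * Real.sqrt (fd y (x2 y)) - x1 y ^ m * Real.sqrt (fd y (x1 y)) = 0
      rw [sqrt_fd_left h1 h2 ha1.le le_rfl, sqrt_fd_right h1 h2 le_rfl]
      ring
    · intro x hx
      have hxpos : 0 < x := lt_trans ha1 hx.1
      have hfpos : 0 < fd y x := fd_pos h1 h2 hx.1 hx.2
      have hdf : HasDerivAt (fun x => fd y x) (2*x - 2*x^3) x := by
        have H := (((hasDerivAt_pow 2 x).const_add (2*y)).sub ((hasDerivAt_pow 4 x).div_const 2))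
        have : (fun x : ℝ => 2*y + x^2 - x^4/2) = fun x : ℝ => 2*y + x^2 - x^4/2 := rfl
        unfold fd
        refine H.congr_deriv ?_
        push_cast
        ring
      have hds : HasDerivAt (fun x => Real.sqrt (fd y x))
          (1/(2*Real.sqrt (fd y x)) * (2*x - 2*x^3)) x :=
        (Real.hasDerivAt_sqrt hfpos.ne').comp x hdf
      have hdu := (hasDerivAt_pow m x).mul hds
      have hval : (↑m * x ^ (m - 1) * Real.sqrt (fd y x)
          + x ^ m * (1/(2*Real.sqrt (fd y x)) * (2*x - 2*x^3))) = u' x := by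
        have hsp : Real.sqrt (fd y x) ≠ 0 := (Real.sqrt_pos.2 hfpos).ne'
        rw [hu'def]
        field_simp
        ring
      rw [hval] at hdu
      exact hdu.hasDerivWithinAt
  have stepB : (∫ x in (0:ℝ)..2, u' x) = ∫ x in (x1 y)..(x2 y), u' x := by
    have i1 : (∫ x in (0:ℝ)..(x1 y), u' x) = 0 := by
      rw [intervalIntegral.integral_congr (g := fun _ => (0:ℝ))
        (fun x hx => by
          rw [Set.uIcc_of_le ha1.le] at hx
          rw [hu'def]
          simp [sqrt_fd_left h1 h2 hx.1 hx.2])]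
      simp
    have i3 : (∫ x in (x2 y)..(2:ℝ), u' x) = 0 := by
      rw [intervalIntegral.integral_congr (g := fun _ => (0:ℝ))
        (fun x hx => by
          rw [Set.uIcc_of_le (by linarith : x2 y ≤ 2)] at hx
          rw [hu'def]
          simp [sqrt_fd_right h1 h2 hx.1])]
      simp
    have A := intervalIntegral.integral_add_adjacent_intervals
      (hKsub 0 (x1 y) le_rfl (by linarith) ha1.le)
      (hKsub (x1 y) (x2 y) ha1.le (by linarith) h12.le)
    have B := intervalIntegral.integral_add_adjacent_intervals
      (hKsub 0 (x2 y) le_rfl (by linarith) (by linarith))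
      (hKsub (x2 y) 2 (by linarith) le_rfl ha2.le)
    linarith
  have stepC : (∫ x in (0:ℝ)..2, u' x)
      = (m:ℝ) * (∫ x in (0:ℝ)..2, x^(m-1) * Real.sqrt (fd y x))
        + ((∫ x in (0:ℝ)..2, x^(m+1) * (Real.sqrt (fd y x))⁻¹)
          - (∫ x in (0:ℝ)..2, x^(m+3) * (Real.sqrt (fd y x))⁻¹)) := by
    have e : ∀ x : ℝ, u' x = (m:ℝ)*(x^(m-1) * Real.sqrt (fd y x))
        + (x^(m+1) * (Real.sqrt (fd y x))⁻¹ - x^(m+3) * (Real.sqrt (fd y x))⁻¹) := by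
      intro x; rw [hu'def]; ring
    rw [intervalIntegral.integral_congr (g := fun x => (m:ℝ)*(x^(m-1) * Real.sqrt (fd y x))
        + (x^(m+1) * (Real.sqrt (fd y x))⁻¹ - x^(m+3) * (Real.sqrt (fd y x))⁻¹))
        (fun x _ => e x)]
    rw [intervalIntegral.integral_add ((Ik_int y (m-1) 0 2).const_mul _)
      ((Jk_int h1 h2 (m+1)).sub (Jk_int h1 h2 (m+3)))]
    rw [intervalIntegral.integral_sub (Jk_int h1 h2 (m+1)) (Jk_int h1 h2 (m+3))]
    rw [intervalIntegral.integral_const_mul]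
  rw [← stepC, stepB, stepA]

lemma hasDeriv_Iint (h1 : -1/4 < y) (h2 : y < 0) (i : ℕ) :
    HasDerivAt (Iint i) (2 * ∫ x in (0:ℝ)..2, x^i * (Real.sqrt (fd y x))⁻¹) y := by
  have hG := (hasDeriv_G h1 h2 i).const_mul (2:ℝ)
  apply hG.congr_of_eventuallyEq
  have hmem : Set.Ioo (-1/4 : ℝ) 0 ∈ nhds y := isOpen_Ioo.mem_nhds ⟨h1, h2⟩
  filter_upwards [hmem] with z hz
  exact G_eq_I hz.1 hz.2 i

end PFaux

theorem picard_fuchs_interior (h : ℝ) (hh : h ∈ Set.Ioo (-(1:ℝ)/4) 0) :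
    DifferentiableAt ℝ (Iint 0) h ∧ DifferentiableAt ℝ (Iint 2) h ∧
    Iint 0 h = (4/3) * h * deriv (Iint 0) h + (1/3) * deriv (Iint 2) h ∧
    Iint 2 h = (4/15) * h * deriv (Iint 0) h + (4*h/5 + 4/15) * deriv (Iint 2) h := by
  obtain ⟨h1', h2⟩ := hh
  have h1 : -1/4 < h := by linarith
  have d0 := PFaux.hasDeriv_Iint h1 h2 0
  have d2 := PFaux.hasDeriv_Iint h1 h2 2
  have e0 := PFaux.G_eq_I h1 h2 0
  have e2 := PFaux.G_eq_I h1 h2 2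
  have A0 := PFaux.id_pow4 h1 h2 0
  have A2 := PFaux.id_pow4 h1 h2 2
  have B1 := PFaux.id_ibp h1 h2 1
  have B3 := PFaux.id_ibp h1 h2 3
  norm_num at d0 d2 e0 e2 A0 A2 B1 B3
  refine ⟨d0.differentiableAt, d2.differentiableAt, ?_, ?_⟩
  · rw [d0.deriv, d2.deriv, e0]
    linear_combination (2/3)*A0 + (2/3)*B1
  · rw [d0.deriv, d2.deriv, e2]
    linear_combination (2/5)*A2 + (2/5)*B3 + (2/15)*A0 - (4/15)*B1
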